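/- arXiv:1901.11363 — 3 statements merged into one kernel-verified Lean document; each statement's English description precedes it below -/
import Mathlib

section
/- There exists a constant C > 0 such that for all x ≥ 0 and y > 0, σ(x) − σ(y) − σ'(y)·(x−y) ≥ C·(x−y)²/((1+y)(x+y)), where σ(x) = x·ln(x) − (1+x)·ln(1+x) (with σ(0) := 0). -/
noncomputable def sigmaBose (x : ℝ) : ℝ := x * Real.log x - (1 + x) * Real.log (1 + x)

/-- The derivative σ'(y) = ln y − ln(1+y). -/
noncomputable def sigmaBose' (y : ℝ) : ℝ := Real.log y - Real.log (1 + y)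

private lemma pade_lower {t : ℝ} (ht : 1 ≤ t) : 2*(t-1)/(t+1) ≤ Real.log t := by
  have h0 : (0:ℝ) < t := lt_of_lt_of_le one_pos ht
  set f : ℝ → ℝ := fun u => Real.log u - 2*(u-1)/(u+1) with hf
  have hderiv : ∀ u ∈ Set.Icc (1:ℝ) t, HasDerivAt f ((u-1)^2/(u*(u+1)^2)) u := by
    intro u hu
    have hu0 : (0:ℝ) < u := lt_of_lt_of_le one_pos hu.1
    have hu1 : u + 1 ≠ 0 := by positivity
    have h1 : HasDerivAt Real.log u⁻¹ u := Real.hasDerivAt_log hu0.ne'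
    have h2 : HasDerivAt (fun u : ℝ => 2*(u-1)/(u+1)) (4/(u+1)^2) u := by
      have ha : HasDerivAt (fun u : ℝ => 2*(u-1)) 2 u := by
        simpa using ((hasDerivAt_id u).sub_const 1).const_mul 2
      have hb : HasDerivAt (fun u : ℝ => u+1) 1 u := (hasDerivAt_id u).add_const 1
      have := ha.div hb hu1
      refine this.congr_deriv ?_
      ring
    have h3 := h1.sub h2
    refine h3.congr_deriv ?_
    rw [inv_eq_one_div]
    field_simp
    ring
  have hmono : MonotoneOn f (Set.Icc 1 t) := by
    apply monotoneOn_of_deriv_nonneg (convex_Icc 1 t)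
    · exact fun u hu => (hderiv u hu).continuousAt.continuousWithinAt
    · intro u hu
      have hu' : u ∈ Set.Icc (1:ℝ) t := interior_subset hu
      exact (hderiv u hu').differentiableAt.differentiableWithinAt
    · intro u hu
      have hu' : u ∈ Set.Icc (1:ℝ) t := interior_subset hu
      have hu0 : (0:ℝ) < u := lt_of_lt_of_le one_pos hu'.1
      rw [(hderiv u hu').deriv]
      have : (0:ℝ) < u*(u+1)^2 := mul_pos hu0 (pow_pos (by linarith) 2)
      exact div_nonneg (sq_nonneg _) this.le
  have h1m : (1:ℝ) ∈ Set.Icc (1:ℝ) t := Set.left_mem_Icc.mpr ht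
  have htm : t ∈ Set.Icc (1:ℝ) t := Set.right_mem_Icc.mpr ht
  have := hmono h1m htm ht
  simp only [hf, Real.log_one] at this
  norm_num at this
  linarith

private lemma pade_upper {t : ℝ} (ht : 1 ≤ t) : Real.log t ≤ (t^2-1)/(2*t) := by
  have h0 : (0:ℝ) < t := lt_of_lt_of_le one_pos ht
  set g : ℝ → ℝ := fun u => Real.log u - (u^2-1)/(2*u) with hg
  have hderiv : ∀ u ∈ Set.Icc (1:ℝ) t, HasDerivAt g (-((u-1)^2/(2*u^2))) u := by
    intro u hu
    have hu0 : (0:ℝ) < u := lt_of_lt_of_le one_pos hu.1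
    have hu1 : (2:ℝ)*u ≠ 0 := by positivity
    have h1 : HasDerivAt Real.log u⁻¹ u := Real.hasDerivAt_log hu0.ne'
    have h2 : HasDerivAt (fun u : ℝ => (u^2-1)/(2*u)) ((u^2+1)/(2*u^2)) u := by
      have ha : HasDerivAt (fun u : ℝ => u^2-1) (2*u) u := by
        simpa using ((hasDerivAt_pow 2 u).sub_const 1)
      have hb : HasDerivAt (fun u : ℝ => 2*u) 2 u := by
        simpa using (hasDerivAt_id u).const_mul 2
      have := ha.div hb hu1
      refine this.congr_deriv ?_
      field_simp
      ring
    have h3 := h1.sub h2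
    refine h3.congr_deriv ?_
    rw [inv_eq_one_div]
    field_simp
    ring
  have hmono : AntitoneOn g (Set.Icc 1 t) := by
    apply antitoneOn_of_deriv_nonpos (convex_Icc 1 t)
    · exact fun u hu => (hderiv u hu).continuousAt.continuousWithinAt
    · intro u hu
      have hu' : u ∈ Set.Icc (1:ℝ) t := interior_subset hu
      exact (hderiv u hu').differentiableAt.differentiableWithinAt
    · intro u hu
      have hu' : u ∈ Set.Icc (1:ℝ) t := interior_subset hu
      have hu0 : (0:ℝ) < u := lt_of_lt_of_le one_pos hu'.1
      rw [(hderiv u hu').deriv]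
      have : (0:ℝ) < 2*u^2 := by positivity
      have := div_nonneg (sq_nonneg (u-1)) this.le
      linarith
  have h1m : (1:ℝ) ∈ Set.Icc (1:ℝ) t := Set.left_mem_Icc.mpr ht
  have htm : t ∈ Set.Icc (1:ℝ) t := Set.right_mem_Icc.mpr ht
  have := hmono h1m htm ht
  simp only [hg, Real.log_one] at this
  norm_num at this
  linarith

private lemma log_div_ge {a b : ℝ} (hb : 0 < b) (h : b ≤ a) :
    2*(a-b)/(a+b) ≤ Real.log a - Real.log b := by
  have ha : 0 < a := hb.trans_le h
  have ht : 1 ≤ a/b := (one_le_div hb).mpr h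
  have := pade_lower ht
  rw [Real.log_div ha.ne' hb.ne'] at this
  have e : 2*(a/b-1)/(a/b+1) = 2*(a-b)/(a+b) := by
    rw [div_eq_div_iff (by positivity) (by positivity)]
    field_simp
    try ring
  linarith [e ▸ this]

private lemma log_div_le {a b : ℝ} (hb : 0 < b) (h : b ≤ a) :
    Real.log a - Real.log b ≤ (a-b)*(a+b)/(2*a*b) := by
  have ha : 0 < a := hb.trans_le h
  have ht : 1 ≤ a/b := (one_le_div hb).mpr h
  have := pade_upper ht
  rw [Real.log_div ha.ne' hb.ne'] at this
  have e : ((a/b)^2-1)/(2*(a/b)) = (a-b)*(a+b)/(2*a*b) := by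
    rw [div_eq_div_iff (by positivity) (by positivity)]
    field_simp
    try ring
  linarith [e ▸ this]

set_option maxHeartbeats 1000000 in
theorem bosonic_relative_entropy_coercivity_pointwise :
    ∃ C : ℝ, 0 < C ∧ ∀ x y : ℝ, 0 ≤ x → 0 < y →
      sigmaBose x - sigmaBose y - sigmaBose' y * (x - y) ≥
        C * (x - y) ^ 2 / ((1 + y) * (x + y)) := by
  refine ⟨1/2, by norm_num, fun x y hx hy => ?_⟩
  have hy1 : (0:ℝ) < 1 + y := by linarith
  rcases eq_or_lt_of_le hx with hx0 | hx
  · -- x = 0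
    subst hx0
    have hD : sigmaBose 0 - sigmaBose y - sigmaBose' y * (0 - y) = Real.log (1+y) := by
      simp [sigmaBose, sigmaBose']
      ring
    have h := log_div_ge (b := 1) one_pos (by linarith : (1:ℝ) ≤ 1+y)
    rw [Real.log_one, sub_zero] at h
    have step : 1/2 * (0-y)^2/((1+y)*(0+y)) ≤ 2*((1+y)-1)/((1+y)+1) := by
      rw [div_le_div_iff₀ (mul_pos hy1 (by linarith)) (by linarith)]
      nlinarith [mul_pos hy hy, mul_pos (mul_pos hy hy) hy]
    rw [ge_iff_le, hD]
    linarith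
  · have hx1 : (0:ℝ) < 1 + x := by linarith
    have hD : sigmaBose x - sigmaBose y - sigmaBose' y * (x - y) =
        x * (Real.log (x*(1+y)) - Real.log (y*(1+x)))
        - (Real.log (1+x) - Real.log (1+y)) := by
      simp only [sigmaBose, sigmaBose']
      rw [Real.log_mul hx.ne' hy1.ne', Real.log_mul hy.ne' hx1.ne']
      ring
    rw [ge_iff_le, hD]
    rcases le_or_gt y x with hxy | hxy
    · -- case y ≤ x
      have hΔ := log_div_ge (mul_pos hy hx1) (by nlinarith : y*(1+x) ≤ x*(1+y))
      have hL := log_div_le hy1 (by linarith : 1+y ≤ 1+x)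
      have hΔ' : 2*(x-y)/(x+y+2*(x*y)) ≤ Real.log (x*(1+y)) - Real.log (y*(1+x)) := by
        have e1 : x*(1+y) - y*(1+x) = x - y := by ring
        have e2 : x*(1+y) + y*(1+x) = x+y+2*(x*y) := by ring
        rw [e1, e2] at hΔ; exact hΔ
      have hxΔ := mul_le_mul_of_nonneg_left hΔ' hx.le
      have hp : (0:ℝ) < x+y+2*(x*y) := by nlinarith
      have key : x * (2*(x-y)/(x+y+2*(x*y))) - ((1+x)-(1+y))*((1+x)+(1+y))/(2*(1+x)*(1+y)) =
          (x-y)^2*(2+3*x+y+2*(x*y))/(2*(1+x)*(1+y)*(x+y+2*(x*y))) := by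
        field_simp
        ring
      have step : 1/2 * (x-y)^2/((1+y)*(x+y)) ≤
          (x-y)^2*(2+3*x+y+2*(x*y))/(2*(1+x)*(1+y)*(x+y+2*(x*y))) := by
        rw [div_le_div_iff₀ (by nlinarith) (by nlinarith)]
        nlinarith [mul_nonneg (mul_nonneg (sq_nonneg (x-y)) hy1.le)
          (by nlinarith : (0:ℝ) ≤ x+y+2*x^2+x*y+y^2+2*(x*y^2))]
      linarith
    · -- case x < y
      have hΔ := log_div_le (mul_pos hx hy1) (by nlinarith : x*(1+y) ≤ y*(1+x))
      have hL := log_div_ge hx1 (by linarith : 1+x ≤ 1+y)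
      have hΔ' : Real.log (y*(1+x)) - Real.log (x*(1+y)) ≤
          (y-x)*(x+y+2*(x*y))/(2*(y*(1+x))*(x*(1+y))) := by
        have e1 : y*(1+x) - x*(1+y) = y - x := by ring
        have e2 : y*(1+x) + x*(1+y) = x+y+2*(x*y) := by ring
        rw [e1, e2] at hΔ; exact hΔ
      have hΔ'' : -((y-x)*(x+y+2*(x*y))/(2*(y*(1+x))*(x*(1+y)))) ≤
          Real.log (x*(1+y)) - Real.log (y*(1+x)) := by linarith
      have hxΔ := mul_le_mul_of_nonneg_left hΔ'' hx.le
      have hL' : 2*(y-x)/(2+x+y) ≤ Real.log (1+y) - Real.log (1+x) := by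
        have e1 : (1+y) - (1+x) = y - x := by ring
        have e2 : (1+y) + (1+x) = 2+x+y := by ring
        rw [e1, e2] at hL; exact hL
      have key : x * (-((y-x)*(x+y+2*(x*y))/(2*(y*(1+x))*(x*(1+y))))) + 2*(y-x)/(2+x+y) =
          (y-x)^2*(2+x+3*y+2*(x*y))/(2*(y*(1+x)*(1+y)*(2+x+y))) := by
        field_simp
        ring
      have hq : (0:ℝ) < 2*(y*(1+x)*(1+y)*(2+x+y)) :=
        mul_pos two_pos (mul_pos (mul_pos (mul_pos hy hx1) hy1) (by linarith))
      have hbr : (0:ℝ) ≤ 2*x+x^2+x*y+2*y^2+x^2*y+x*(y^2) := by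
        nlinarith [mul_pos hx hy, mul_pos (mul_pos hx hx) hy, mul_pos (mul_pos hx hy) hy]
      have step : 1/2 * (x-y)^2/((1+y)*(x+y)) ≤
          (y-x)^2*(2+x+3*y+2*(x*y))/(2*(y*(1+x)*(1+y)*(2+x+y))) := by
        rw [div_le_div_iff₀ (by nlinarith) hq]
        linarith [mul_nonneg (mul_nonneg (sq_nonneg (x-y)) hy1.le) hbr]
      linarith
end

section
/- Let H be a Hermitian n×n matrix, β > 0, and let Γ be any density matrix (positive semidefinite with trace 1). Then tr[HΓ] + (1/β) tr[Γ ln Γ] ≥ −(1/β) ln tr[e^{−βH}], with equality if and only if Γ = e^{−βH}/tr[e^{−βH}]. -/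
open Matrix

/-- The von Neumann entropy of a positive semidefinite matrix, via its eigenvalues
(with the convention `0 · ln 0 = 0`, which is automatic since `Real.log 0 = 0`). -/
noncomputable def vonNeumannEntropy {n : ℕ} {Γ : Matrix (Fin n) (Fin n) ℝ}
    (hΓ : Γ.PosSemidef) : ℝ :=
  -∑ i, hΓ.1.eigenvalues i * Real.log (hΓ.1.eigenvalues i)

lemma g_nonneg {l m : ℝ} (hl : 0 ≤ l) (hm : 0 < m) :
    0 ≤ l * Real.log l - l * Real.log m - l + m := by
  rcases eq_or_lt_of_le hl with h | h
  · simp [← h]; positivity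
  · have h1 : Real.log (m / l) ≤ m / l - 1 := Real.log_le_sub_one_of_pos (by positivity)
    have h2 : Real.log (m / l) = Real.log m - Real.log l := Real.log_div hm.ne' h.ne'
    have h3 : l * (m / l - 1) = m - l := by field_simp
    nlinarith [mul_le_mul_of_nonneg_left h1 hl]

lemma g_eq_zero_iff {l m : ℝ} (hl : 0 ≤ l) (hm : 0 < m) :
    l * Real.log l - l * Real.log m - l + m = 0 ↔ l = m := by
  constructor
  · intro h
    rcases eq_or_lt_of_le hl with h0 | h0
    · exfalso; rw [← h0] at h; simp at h; linarith
    · by_contra hne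
      have hne' : m / l ≠ 1 := by
        intro hc; apply hne; field_simp at hc; linarith
      have h1 : Real.log (m / l) < m / l - 1 :=
        Real.log_lt_sub_one_of_pos (by positivity) hne'
      have h2 : Real.log (m / l) = Real.log m - Real.log l := Real.log_div hm.ne' h0.ne'
      have h3 : l * (m / l - 1) = m - l := by field_simp
      nlinarith [mul_lt_mul_of_pos_left h1 h0]
  · intro h; subst h; ring

lemma trace_conj_diag {n : ℕ} (d e : Fin n → ℝ) (W : Matrix (Fin n) (Fin n) ℝ) :
    (W * diagonal e * star W * diagonal d).trace = ∑ j, ∑ k, d j * e k * (W j k)^2 := by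
  have h : ∀ x : Fin n, (W * diagonal e * star W * diagonal d) x x
      = ∑ k, d x * e k * (W x k)^2 := by
    intro x
    rw [mul_diagonal, Matrix.mul_apply, Finset.sum_mul]
    refine Finset.sum_congr rfl fun k _ => ?_
    rw [mul_diagonal, Matrix.star_apply, star_trivial]
    ring
  simp only [Matrix.trace, diag_apply, h]

theorem gibbs_variational_principle {n : ℕ} (H Γ : Matrix (Fin n) (Fin n) ℝ)
    (hH : H.IsHermitian) (hΓ : Γ.PosSemidef) (hΓtr : Γ.trace = 1) (β : ℝ) (hβ : 0 < β) :
    (H * Γ).trace - (1 / β) * vonNeumannEntropy hΓ ≥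
      -(1 / β) * Real.log (NormedSpace.exp (-β • H)).trace ∧
    ((H * Γ).trace - (1 / β) * vonNeumannEntropy hΓ =
        -(1 / β) * Real.log (NormedSpace.exp (-β • H)).trace ↔
      Γ = ((NormedSpace.exp (-β • H)).trace)⁻¹ • NormedSpace.exp (-β • H)) := by
  -- Notation
  classical
  set U : Matrix (Fin n) (Fin n) ℝ := (hH.eigenvectorUnitary : Matrix (Fin n) (Fin n) ℝ) with hUdef
  set V : Matrix (Fin n) (Fin n) ℝ := (hΓ.1.eigenvectorUnitary : Matrix (Fin n) (Fin n) ℝ) with hVdef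
  set ε : Fin n → ℝ := hH.eigenvalues with hεdef
  set lam : Fin n → ℝ := hΓ.1.eigenvalues with hlamdef
  have hUU : star U * U = 1 := Unitary.coe_star_mul_self _
  have hUU' : U * star U = 1 := Unitary.coe_mul_star_self _
  have hVV : star V * V = 1 := Unitary.coe_star_mul_self _
  have hVV' : V * star V = 1 := Unitary.coe_mul_star_self _
  have hUunit : IsUnit U := ⟨⟨U, star U, hUU', hUU⟩, rfl⟩
  have hUinv : U⁻¹ = star U := inv_eq_left_inv hUU
  have hspec : H = U * diagonal ε * star U := by
    have := hH.spectral_theorem; simpa using this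
  have hΓspec : Γ = V * diagonal lam * star V := by
    have := hΓ.1.spectral_theorem; simpa using this
  set W : Matrix (Fin n) (Fin n) ℝ := star U * V with hWdef
  have hsW : star W = star V * U := by rw [hWdef, StarMul.star_mul, star_star]
  have hWW' : W * star W = 1 := by
    rw [hWdef, hsW]
    calc star U * V * (star V * U) = star U * (V * star V) * U := by
          simp only [Matrix.mul_assoc]
      _ = 1 := by rw [hVV', Matrix.mul_one, hUU]
  have hWW : star W * W = 1 := by
    rw [hWdef, hsW]
    calc star V * U * (star U * V) = star V * (U * star U) * V := by
          simp only [Matrix.mul_assoc]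
      _ = 1 := by rw [hUU', Matrix.mul_one, hVV]
  -- exponential
  have hexp : NormedSpace.exp (-β • H) = U * diagonal (fun i => Real.exp (-β * ε i)) * star U := by
    have h1 : -β • H = U * diagonal (fun i => -β * ε i) * star U := by
      conv_lhs => rw [hspec]
      have h2 : (diagonal fun i => -β * ε i) = -β • diagonal ε := by
        rw [← diagonal_smul]; congr 1
      rw [h2]
      simp [Matrix.mul_smul, Matrix.smul_mul]
    rw [h1, ← hUinv, Matrix.exp_conj _ _ hUunit, Matrix.exp_diagonal, hUinv]
    congr 2
    funext i
    simp [Pi.exp_def, ← Real.exp_eq_exp_ℝ]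
  set Z : ℝ := ∑ j, Real.exp (-β * ε j) with hZdef
  have hZtr : (NormedSpace.exp (-β • H)).trace = Z := by
    rw [hexp, Matrix.trace_mul_comm, ← Matrix.mul_assoc, hUU, Matrix.one_mul, Matrix.trace_diagonal]
  -- positivity facts
  have hn : 0 < n := by
    rcases Nat.eq_zero_or_pos n with h | h
    · subst h; rw [Matrix.trace_fin_zero] at hΓtr; exact absurd hΓtr (by norm_num)
    · exact h
  haveI : Nonempty (Fin n) := Fin.pos_iff_nonempty.mp hn
  have hZpos : 0 < Z := Finset.sum_pos (fun j _ => Real.exp_pos _) Finset.univ_nonempty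
  set μ : Fin n → ℝ := fun j => Z⁻¹ * Real.exp (-β * ε j) with hμdef
  have hμpos : ∀ j, 0 < μ j := fun j => mul_pos (inv_pos.mpr hZpos) (Real.exp_pos _)
  have hμ1 : ∑ j, μ j = 1 := by
    rw [hμdef, ← Finset.mul_sum, ← hZdef, inv_mul_cancel₀ hZpos.ne']
  have hlogμ : ∀ j, Real.log (μ j) = -β * ε j - Real.log Z := by
    intro j
    rw [hμdef]
    rw [Real.log_mul (inv_ne_zero hZpos.ne') (Real.exp_ne_zero _), Real.log_inv, Real.log_exp]
    ring
  have hlam_nonneg : ∀ k, 0 ≤ lam k := fun k => hΓ.eigenvalues_nonneg k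
  have hlam1 : ∑ k, lam k = 1 := by
    have : Γ.trace = ∑ k, lam k := by
      conv_lhs => rw [hΓspec]
      rw [Matrix.trace_mul_comm, ← Matrix.mul_assoc, hVV, Matrix.one_mul, Matrix.trace_diagonal]
    rw [← this, hΓtr]
  -- row and column sums of W squared
  have hrow : ∀ j, ∑ k, (W j k)^2 = 1 := by
    intro j
    have h := (Matrix.ext_iff.mpr hWW') j j
    simpa [Matrix.mul_apply, Matrix.star_apply, Matrix.one_apply, pow_two] using h
  have hcol : ∀ k, ∑ j, (W j k)^2 = 1 := by
    intro k
    have h := (Matrix.ext_iff.mpr hWW) k k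
    simp only [Matrix.mul_apply, Matrix.star_apply, star_trivial, Matrix.one_apply_eq] at h
    rw [← h]
    refine Finset.sum_congr rfl fun j _ => ?_
    ring
  -- trace formula
  have hT : (H * Γ).trace = ∑ j, ∑ k, ε j * lam k * (W j k)^2 := by
    have h1 : H * Γ = U * (diagonal ε * W * diagonal lam * star V) := by
      conv_lhs => rw [hspec, hΓspec]
      rw [hWdef]
      simp only [Matrix.mul_assoc]
    rw [h1, Matrix.trace_mul_comm]
    have h2 : diagonal ε * W * diagonal lam * star V * U = diagonal ε * (W * diagonal lam * star W) := by
      rw [hsW]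
      simp only [Matrix.mul_assoc]
    rw [h2, Matrix.trace_mul_comm, trace_conj_diag]
  set T : ℝ := (H * Γ).trace with hTdef
  have hE : vonNeumannEntropy hΓ = -∑ k, lam k * Real.log (lam k) := rfl
  set L : ℝ := ∑ k, lam k * Real.log (lam k) with hLdef
  set S : ℝ := ∑ j, ∑ k, (W j k)^2 * (lam k * Real.log (lam k) - lam k * Real.log (μ j) - lam k + μ j) with hSdef
  -- double-sum evaluations
  have hC1 : ∀ c : Fin n → ℝ, ∑ j, ∑ k, (W j k)^2 * c k = ∑ k, c k := by
    intro c
    rw [Finset.sum_comm]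
    refine Finset.sum_congr rfl fun k _ => ?_
    rw [← Finset.sum_mul, hcol k, one_mul]
  have hC5 : ∑ j, ∑ k, (W j k)^2 * μ j = 1 := by
    rw [← hμ1]
    refine Finset.sum_congr rfl fun j _ => ?_
    rw [← Finset.sum_mul, hrow j, one_mul]
  have hS : S = β * T + L + Real.log Z := by
    have e1 : S = ∑ j, ∑ k, ((W j k)^2 * (lam k * Real.log (lam k)) + β * (ε j * lam k * (W j k)^2)
        + Real.log Z * ((W j k)^2 * lam k) - (W j k)^2 * lam k + (W j k)^2 * μ j) :=
      Finset.sum_congr rfl fun j _ => Finset.sum_congr rfl fun k _ => by rw [hlogμ j]; ring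
    rw [e1]
    simp only [Finset.sum_add_distrib, Finset.sum_sub_distrib, ← Finset.mul_sum]
    rw [hC1 (fun k => lam k * Real.log (lam k)), hC1 lam, hlam1, hC5, ← hT, ← hLdef]
    ring
  have hSnonneg : 0 ≤ S :=
    Finset.sum_nonneg fun j _ => Finset.sum_nonneg fun k _ =>
      mul_nonneg (sq_nonneg _) (g_nonneg (hlam_nonneg k) (hμpos j))
  have hkey : T - (1/β) * vonNeumannEntropy hΓ + (1/β) * Real.log Z = (1/β) * S := by
    rw [hE, hS]
    field_simp
    ring
  have hβ' : (1:ℝ)/β ≠ 0 := one_div_ne_zero hβ.ne'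
  have hiff1 : (T - (1/β) * vonNeumannEntropy hΓ = -(1/β) * Real.log Z) ↔ S = 0 := by
    constructor
    · intro h
      have h2 : (1/β) * S = 0 := by linarith [hkey]
      exact (mul_eq_zero.mp h2).resolve_left hβ'
    · intro h
      have h2 := hkey
      rw [h, mul_zero] at h2
      linarith
  -- S = 0 iff the commutation condition
  have hscond : S = 0 ↔ ∀ j k, W j k * lam k = μ j * W j k := by
    constructor
    · intro h0 j k
      have hjk : (W j k)^2 * (lam k * Real.log (lam k) - lam k * Real.log (μ j) - lam k + μ j) = 0 := by
        have h1 := (Finset.sum_eq_zero_iff_of_nonneg (fun j _ => Finset.sum_nonneg fun k _ =>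
          mul_nonneg (sq_nonneg _) (g_nonneg (hlam_nonneg k) (hμpos j)))).mp h0 j (Finset.mem_univ j)
        exact (Finset.sum_eq_zero_iff_of_nonneg (fun k _ => mul_nonneg (sq_nonneg _)
          (g_nonneg (hlam_nonneg k) (hμpos j)))).mp h1 k (Finset.mem_univ k)
      rcases mul_eq_zero.mp hjk with h | h
      · have hw : W j k = 0 := by
          nlinarith [sq_nonneg (W j k), h]
        rw [hw]; ring
      · have hlm : lam k = μ j := (g_eq_zero_iff (hlam_nonneg k) (hμpos j)).mp h
        rw [hlm]; ring
    · intro h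
      refine Finset.sum_eq_zero fun j _ => Finset.sum_eq_zero fun k _ => ?_
      rcases eq_or_ne (W j k) 0 with hw | hw
      · rw [hw]; ring
      · have hlm : lam k = μ j := mul_left_cancel₀ hw (by linear_combination h j k)
        rw [hlm]; ring
  -- the commutation condition iff Γ is the Gibbs state
  have cancel : ∀ M : Matrix (Fin n) (Fin n) ℝ, U * (star U * M * U) * star U = M := by
    intro M
    calc U * (star U * M * U) * star U = U * star U * M * (U * star U) := by
          simp only [Matrix.mul_assoc]
      _ = M := by rw [hUU', Matrix.one_mul, Matrix.mul_one]
  have conjΓ : star U * Γ * U = W * diagonal lam * star W := by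
    conv_lhs => rw [hΓspec]
    rw [hsW, hWdef]
    simp only [Matrix.mul_assoc]
  have conjG : star U * (Z⁻¹ • NormedSpace.exp (-β • H)) * U = diagonal μ := by
    rw [hexp, Matrix.mul_smul, Matrix.smul_mul]
    have h3 : star U * (U * diagonal (fun i => Real.exp (-β * ε i)) * star U) * U
        = diagonal (fun i => Real.exp (-β * ε i)) := by
      calc star U * (U * diagonal (fun i => Real.exp (-β * ε i)) * star U) * U
          = star U * U * diagonal (fun i => Real.exp (-β * ε i)) * (star U * U) := by
            simp only [Matrix.mul_assoc]
        _ = _ := by rw [hUU, Matrix.one_mul, Matrix.mul_one]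
    rw [h3, ← diagonal_smul]
    congr 1
  have hGiff : (Γ = Z⁻¹ • NormedSpace.exp (-β • H)) ↔ ∀ j k, W j k * lam k = μ j * W j k := by
    constructor
    · intro h j k
      have h2 : W * diagonal lam * star W = diagonal μ := by
        rw [← conjΓ, ← conjG, h]
      have h3 : W * diagonal lam = diagonal μ * W := by
        calc W * diagonal lam = W * diagonal lam * (star W * W) := by
              rw [hWW, Matrix.mul_one]
          _ = W * diagonal lam * star W * W := by simp only [Matrix.mul_assoc]
          _ = diagonal μ * W := by rw [h2]
      have h4 := (Matrix.ext_iff.mpr h3) j k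
      simpa [mul_diagonal, diagonal_mul] using h4
    · intro h
      have h2 : W * diagonal lam * star W = diagonal μ := by
        ext j l
        have hterm : ∀ k, (W * diagonal lam) j k * star W k l = μ j * (W j k * star W k l) := by
          intro k
          rw [mul_diagonal, h j k]
          ring
        rw [Matrix.mul_apply]
        simp only [hterm]
        rw [← Finset.mul_sum, ← Matrix.mul_apply, hWW']
        simp [Matrix.one_apply, diagonal_apply, mul_ite]
      calc Γ = U * (star U * Γ * U) * star U := (cancel Γ).symm
        _ = U * (star U * (Z⁻¹ • NormedSpace.exp (-β • H)) * U) * star U := by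
              rw [conjΓ, h2, ← conjG]
        _ = Z⁻¹ • NormedSpace.exp (-β • H) := cancel _
  -- finish
  rw [hZtr]
  constructor
  · have h1 : 0 ≤ (1/β) * S := mul_nonneg (le_of_lt (by positivity)) hSnonneg
    linarith [hkey]
  · constructor
    · intro h
      exact hGiff.mpr (hscond.mp (hiff1.mp h))
    · intro h
      exact hiff1.mpr (hscond.mpr (hGiff.mp h))
end

section
/- Let Γ = Σ_{α=1}^m λ_α |ψ_α⟩⟨ψ_α| be a density matrix on a finite-dimensional Hilbert space (λ_α ≥ 0, Σλ_α = 1, ψ_α orthonormal), and let {P_α}_{α=1}^m be a family of rank-one orthogonal projections (not necessarily mutually orthogonal). Define Γ̂ = Σ_α λ_α P_α. Then S(Γ̂) ≥ S(Γ) − ln‖Σ_α P_α‖, where S denotes the von Neumann entropy and ‖·‖ the operator norm. -/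
open Matrix

lemma jensen_log {ι : Type*} (s : Finset ι) (w x : ι → ℝ) (hw : ∀ i ∈ s, 0 ≤ w i)
    (hx : ∀ i ∈ s, 0 < x i) (hsum : ∑ i ∈ s, w i = 1) :
    ∑ i ∈ s, w i * Real.log (x i) ≤ Real.log (∑ i ∈ s, w i * x i) := by
  have hS : 0 < ∑ i ∈ s, w i * x i := by
    obtain ⟨i, hi, hwi⟩ : ∃ i ∈ s, 0 < w i := by
      by_contra h
      push_neg at h
      have : ∑ i ∈ s, w i = 0 := Finset.sum_eq_zero fun i hi => le_antisymm (h i hi) (hw i hi)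
      simp [this] at hsum
    exact Finset.sum_pos' (fun j hj => mul_nonneg (hw j hj) (hx j hj).le)
      ⟨i, hi, mul_pos hwi (hx i hi)⟩
  set S := ∑ i ∈ s, w i * x i with hSdef
  have key : ∀ i ∈ s, w i * Real.log (x i) - w i * Real.log S ≤ w i * x i / S - w i := by
    intro i hi
    have h1 : Real.log (x i / S) ≤ x i / S - 1 :=
      Real.log_le_sub_one_of_pos (div_pos (hx i hi) hS)
    have h2 : Real.log (x i / S) = Real.log (x i) - Real.log S :=
      Real.log_div (hx i hi).ne' hS.ne'
    have h3 : w i * (Real.log (x i) - Real.log S) ≤ w i * (x i / S - 1) :=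
      mul_le_mul_of_nonneg_left (by linarith) (hw i hi)
    ring_nf at h3 ⊢
    linarith
  have := Finset.sum_le_sum key
  rw [Finset.sum_sub_distrib, Finset.sum_sub_distrib, ← Finset.sum_mul, hsum,
    ← Finset.sum_div] at this
  rw [← hSdef] at this
  have hdiv : S / S = 1 := div_self hS.ne'
  linarith


/-- Entropy loss when replacing the orthonormal eigenvectors of a density matrix by
non-orthogonal unit vectors: `S(Γ̂) ≥ S(Γ) − ln‖Σ_α P_α‖`. Here `Γ = Σ λ_α |ψ_α⟩⟨ψ_α|`
with `(ψ_α)` orthonormal, `P_α = |u_α⟩⟨u_α|` are rank-one orthogonal projections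
(`u_α` unit vectors, not necessarily orthogonal), `Γ̂ = Σ λ_α P_α`, the entropies are
computed from the eigenvalues, and `‖·‖` is the operator norm. -/
theorem entropy_lower_bound_nonorthogonal_projections {n m : ℕ}
    (lam : Fin m → ℝ) (hlam : ∀ α, 0 ≤ lam α) (hlam1 : ∑ α, lam α = 1)
    (ψ : Fin m → (Fin n → ℝ)) (hψ : ∀ α β, ψ α ⬝ᵥ ψ β = if α = β then 1 else 0)
    (u : Fin m → (Fin n → ℝ)) (hu : ∀ α, u α ⬝ᵥ u α = 1)
    (hhat : (∑ α, lam α • Matrix.vecMulVec (u α) (u α)).IsHermitian) :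
    -∑ i, hhat.eigenvalues i * Real.log (hhat.eigenvalues i) ≥
      (-∑ α, lam α * Real.log (lam α)) -
        Real.log ‖Matrix.toEuclideanCLM (𝕜 := ℝ) (n := Fin n)
          (∑ α, Matrix.vecMulVec (u α) (u α))‖ := by
  classical
  set Γ : Matrix (Fin n) (Fin n) ℝ := ∑ α, lam α • Matrix.vecMulVec (u α) (u α) with hΓdef
  set T : Matrix (Fin n) (Fin n) ℝ := ∑ α, Matrix.vecMulVec (u α) (u α) with hTdef
  set M : ℝ := ‖Matrix.toEuclideanCLM (𝕜 := ℝ) (n := Fin n) T‖ with hMdef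
  have hmv : ∀ (x : Fin n → ℝ) (k : Fin n),
      (Γ *ᵥ x) k = ∑ α, lam α * (u α ⬝ᵥ x) * u α k := by
    intro x k
    simp only [hΓdef, Matrix.mulVec, dotProduct, Finset.sum_apply,
      Matrix.sum_apply, Matrix.smul_apply, Matrix.vecMulVec_apply, smul_eq_mul,
      Finset.sum_mul, Finset.mul_sum]
    rw [Finset.sum_comm]
    exact Finset.sum_congr rfl fun α _ => Finset.sum_congr rfl fun j _ => by ring
  have hdot : ∀ x y : Fin n → ℝ, y ⬝ᵥ (Γ *ᵥ x) = ∑ α, lam α * (y ⬝ᵥ u α) * (u α ⬝ᵥ x) := by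
    intro x y
    simp only [dotProduct, hmv, Finset.mul_sum]
    rw [Finset.sum_comm]
    refine Finset.sum_congr rfl fun α _ => ?_
    simp only [Finset.sum_mul, Finset.mul_sum]
    rw [Finset.sum_comm]
    exact Finset.sum_congr rfl fun k _ => Finset.sum_congr rfl fun l _ => by ring
  have hTmv : ∀ (x : Fin n → ℝ) (k : Fin n),
      (T *ᵥ x) k = ∑ α, (u α ⬝ᵥ x) * u α k := by
    intro x k
    simp only [hTdef, Matrix.mulVec, dotProduct, Finset.sum_apply,
      Matrix.sum_apply, Matrix.vecMulVec_apply, Finset.sum_mul, Finset.mul_sum]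
    rw [Finset.sum_comm]
    exact Finset.sum_congr rfl fun α _ => Finset.sum_congr rfl fun j _ => by ring
  have hTdot : ∀ x : Fin n → ℝ, x ⬝ᵥ (T *ᵥ x) = ∑ α, (x ⬝ᵥ u α)^2 := by
    intro x
    simp only [dotProduct, hTmv, Finset.mul_sum]
    rw [Finset.sum_comm]
    refine Finset.sum_congr rfl fun α _ => ?_
    rw [sq]
    simp only [Finset.sum_mul, Finset.mul_sum]
    rw [Finset.sum_comm]
    exact Finset.sum_congr rfl fun k _ => Finset.sum_congr rfl fun l _ => by ring
  set b := hhat.eigenvectorBasis with hbdef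
  set μ := hhat.eigenvalues with hμdef
  have heig : ∀ i, Γ *ᵥ ⇑(b i) = μ i • ⇑(b i) := hhat.mulVec_eigenvectorBasis
  have hinner : ∀ x y : EuclideanSpace ℝ (Fin n), (inner ℝ x y : ℝ) = ⇑x ⬝ᵥ ⇑y := by
    intro x y
    simp [PiLp.inner_apply, RCLike.inner_apply, dotProduct, mul_comm]
  have horth : ∀ i j, (⇑(b i) : Fin n → ℝ) ⬝ᵥ ⇑(b j) = if i = j then 1 else 0 := by
    intro i j
    rcases eq_or_ne i j with rfl | h
    · have h1 := hinner (b i) (b i)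
      rw [real_inner_self_eq_norm_sq, b.orthonormal.1 i] at h1
      simpa using h1.symm
    · have h1 := hinner (b i) (b j)
      rw [b.orthonormal.2 h] at h1
      simp [h, ← h1]
  have hpars : ∀ x y : Fin n → ℝ,
      ∑ i, ((⇑(b i) : Fin n → ℝ) ⬝ᵥ x) * (⇑(b i) ⬝ᵥ y) = x ⬝ᵥ y := by
    intro x y
    have h2 := b.sum_inner_mul_inner ((WithLp.equiv 2 (Fin n → ℝ)).symm x)
      ((WithLp.equiv 2 (Fin n → ℝ)).symm y)
    simp only [hinner] at h2
    rw [show (⇑((WithLp.equiv 2 (Fin n → ℝ)).symm x) : Fin n → ℝ) = x from rfl,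
      show (⇑((WithLp.equiv 2 (Fin n → ℝ)).symm y) : Fin n → ℝ) = y from rfl] at h2
    rw [← h2]
    exact Finset.sum_congr rfl fun i _ => by rw [dotProduct_comm]
  have hTnorm : ∀ x : Fin n → ℝ, x ⬝ᵥ (T *ᵥ x) ≤ M * (x ⬝ᵥ x) := by
    intro x
    set x' : EuclideanSpace ℝ (Fin n) := (WithLp.equiv 2 (Fin n → ℝ)).symm x with hx'def
    have h1 : Matrix.toEuclideanCLM (𝕜 := ℝ) T x' = (WithLp.equiv 2 (Fin n → ℝ)).symm (T *ᵥ x) := by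
      exact Matrix.toEuclideanCLM_toLp T x
    have h2 : (inner ℝ x' (Matrix.toEuclideanCLM (𝕜 := ℝ) T x') : ℝ) = x ⬝ᵥ (T *ᵥ x) := by
      rw [h1, hinner]
      rfl
    calc x ⬝ᵥ (T *ᵥ x) = (inner ℝ x' (Matrix.toEuclideanCLM (𝕜 := ℝ) T x') : ℝ) := h2.symm
      _ ≤ ‖x'‖ * ‖Matrix.toEuclideanCLM (𝕜 := ℝ) T x'‖ := real_inner_le_norm _ _
      _ ≤ ‖x'‖ * (M * ‖x'‖) := by
          refine mul_le_mul_of_nonneg_left ?_ (norm_nonneg _)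
          exact (Matrix.toEuclideanCLM (𝕜 := ℝ) T).le_opNorm x'
      _ = M * (‖x'‖ * ‖x'‖) := by ring
      _ = M * (x ⬝ᵥ x) := by rw [← real_inner_self_eq_norm_mul_norm, hinner]; rfl
  -- eigencoefficients
  set c : Fin n → Fin m → ℝ := fun i α => (⇑(b i) : Fin n → ℝ) ⬝ᵥ u α with hcdef
  have hμeq : ∀ i, μ i = ∑ α, lam α * (c i α)^2 := by
    intro i
    have h1 : (⇑(b i) : Fin n → ℝ) ⬝ᵥ (Γ *ᵥ ⇑(b i)) = μ i := by
      rw [heig i, dotProduct_smul, horth i i]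
      simp
    rw [← h1, hdot]
    refine Finset.sum_congr rfl fun α _ => ?_
    rw [hcdef]
    rw [dotProduct_comm (u α)]
    ring
  have hμ0 : ∀ i, 0 ≤ μ i := by
    intro i
    rw [hμeq i]
    exact Finset.sum_nonneg fun α _ => mul_nonneg (hlam α) (sq_nonneg _)
  set g : Fin m → ℝ := fun α => ∑ i, (c i α)^2 * μ i with hgdef
  have hg0 : ∀ α, 0 ≤ g α := fun α =>
    Finset.sum_nonneg fun i _ => mul_nonneg (sq_nonneg _) (hμ0 i)
  have hgΓ : ∀ α, g α = u α ⬝ᵥ (Γ *ᵥ u α) := by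
    intro α
    rw [← hpars (u α) (Γ *ᵥ u α)]
    refine Finset.sum_congr rfl fun i _ => ?_
    have hsym : (⇑(b i) : Fin n → ℝ) ⬝ᵥ (Γ *ᵥ u α) = u α ⬝ᵥ (Γ *ᵥ ⇑(b i)) := by
      rw [hdot, hdot]
      refine Finset.sum_congr rfl fun β _ => ?_
      rw [dotProduct_comm (⇑(b i)) (u β), dotProduct_comm (u α) (u β)]
      ring
    rw [hsym, heig i, dotProduct_smul]
    rw [hcdef]
    rw [dotProduct_comm (u α)]
    simp only [smul_eq_mul]
    ring
  have hcsum : ∀ α, ∑ i, (c i α)^2 = 1 := by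
    intro α
    have h2 := hpars (u α) (u α)
    rw [hu α] at h2
    rw [← h2]
    exact Finset.sum_congr rfl fun i _ => by rw [hcdef, sq]
  have hgsum : ∑ α, g α ≤ M := by
    have e1 : ∀ α, g α = ∑ β, lam β * (u β ⬝ᵥ u α)^2 := by
      intro α
      rw [hgΓ, hdot]
      refine Finset.sum_congr rfl fun β _ => ?_
      rw [dotProduct_comm (u α) (u β)]
      ring
    have e2 : ∑ α, g α = ∑ β, lam β * (u β ⬝ᵥ (T *ᵥ u β)) := by
      simp_rw [e1]
      rw [Finset.sum_comm]
      refine Finset.sum_congr rfl fun β _ => ?_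
      rw [hTdot, Finset.mul_sum]
    rw [e2]
    calc ∑ β, lam β * (u β ⬝ᵥ (T *ᵥ u β)) ≤ ∑ β, lam β * M := by
          refine Finset.sum_le_sum fun β _ => mul_le_mul_of_nonneg_left ?_ (hlam β)
          have h3 := hTnorm (u β)
          rwa [hu β, mul_one] at h3
      _ = M := by rw [← Finset.sum_mul, hlam1, one_mul]
  have hm0 : m ≠ 0 := by
    rintro rfl
    simp at hlam1
  have hM1 : (1:ℝ) ≤ M := by
    set β : Fin m := ⟨0, Nat.pos_of_ne_zero hm0⟩
    have h1 : (1:ℝ) ≤ u β ⬝ᵥ (T *ᵥ u β) := by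
      rw [hTdot]
      have h0 : (u β ⬝ᵥ u β)^2 = 1 := by rw [hu β]; norm_num
      calc (1:ℝ) = (u β ⬝ᵥ u β)^2 := h0.symm
        _ ≤ ∑ α, (u β ⬝ᵥ u α)^2 :=
            Finset.single_le_sum (f := fun α => (u β ⬝ᵥ u α)^2)
              (fun _ _ => sq_nonneg _) (Finset.mem_univ β)
    have h2 := hTnorm (u β)
    rw [hu β, mul_one] at h2
    linarith
  -- the key ε-inequality
  have key : ∀ ε : ℝ, 0 < ε →
      ∑ i, μ i * Real.log (μ i) ≤
        (∑ α, lam α * Real.log (lam α)) + Real.log (M + m * ε) := by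
    intro ε hε
    have s1 : ∑ i, μ i * Real.log (μ i) ≤ ∑ i, μ i * Real.log (μ i + ε) := by
      refine Finset.sum_le_sum fun i _ => ?_
      rcases eq_or_lt_of_le (hμ0 i) with h | h
      · simp [← h]
      · exact mul_le_mul_of_nonneg_left (Real.log_le_log h (by linarith)) (hμ0 i)
    have s2 : ∑ i, μ i * Real.log (μ i + ε)
        = ∑ α, lam α * ∑ i, (c i α)^2 * Real.log (μ i + ε) := by
      have e3 : ∀ i, μ i * Real.log (μ i + ε)
          = ∑ α, lam α * ((c i α)^2 * Real.log (μ i + ε)) := by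
        intro i
        nth_rewrite 1 [hμeq i]
        rw [Finset.sum_mul]
        exact Finset.sum_congr rfl fun α _ => by ring
      simp_rw [e3]
      rw [Finset.sum_comm]
      exact Finset.sum_congr rfl fun α _ => by rw [Finset.mul_sum]
    have s3 : ∀ α, ∑ i, (c i α)^2 * Real.log (μ i + ε) ≤ Real.log (g α + ε) := by
      intro α
      have hj := jensen_log Finset.univ (fun i => (c i α)^2) (fun i => μ i + ε)
        (fun i _ => sq_nonneg _)
        (fun i _ => by have := hμ0 i; show 0 < μ i + ε; linarith) (hcsum α)
      have he : ∑ i, (c i α)^2 * (μ i + ε) = g α + ε := by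
        simp_rw [mul_add]
        rw [Finset.sum_add_distrib, ← Finset.sum_mul, hcsum α, one_mul, hgdef]
      rw [he] at hj
      exact hj
    have s4 : ∑ α, lam α * ∑ i, (c i α)^2 * Real.log (μ i + ε)
        ≤ ∑ α, lam α * Real.log (g α + ε) :=
      Finset.sum_le_sum fun α _ => mul_le_mul_of_nonneg_left (s3 α) (hlam α)
    -- Jensen on the support of lam
    set s : Finset (Fin m) := Finset.univ.filter (fun α => lam α ≠ 0) with hsdef
    have hs1 : ∑ α ∈ s, lam α = 1 := by
      rw [hsdef, Finset.sum_filter_ne_zero]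
      exact hlam1
    have hslam : ∀ α ∈ s, 0 < lam α := by
      intro α hα
      have := (Finset.mem_filter.1 hα).2
      exact lt_of_le_of_ne (hlam α) (Ne.symm this)
    have hgε : ∀ α, 0 < g α + ε := fun α => by have := hg0 α; linarith
    have hj2 := jensen_log s lam (fun α => (g α + ε) / lam α)
      (fun α hα => hlam α) (fun α hα => div_pos (hgε α) (hslam α hα)) hs1
    have hl : ∑ α ∈ s, lam α * Real.log ((g α + ε) / lam α)
        = ∑ α ∈ s, (lam α * Real.log (g α + ε) - lam α * Real.log (lam α)) :=
      Finset.sum_congr rfl fun α hα => by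
        rw [Real.log_div (hgε α).ne' (hslam α hα).ne']; ring
    have hr : ∑ α ∈ s, lam α * ((g α + ε) / lam α) = ∑ α ∈ s, (g α + ε) :=
      Finset.sum_congr rfl fun α hα => by
        rw [← mul_div_assoc]
        exact mul_div_cancel_left₀ _ (hslam α hα).ne'
    have hb2 : ∑ α ∈ s, (g α + ε) ≤ M + m * ε := by
      calc ∑ α ∈ s, (g α + ε) ≤ ∑ α, (g α + ε) :=
            Finset.sum_le_sum_of_subset_of_nonneg (Finset.subset_univ s)
              (fun α _ _ => (hgε α).le)
        _ = (∑ α, g α) + m * ε := by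
            rw [Finset.sum_add_distrib]
            simp [Finset.sum_const, nsmul_eq_mul]
        _ ≤ M + m * ε := by linarith [hgsum]
    have hpos : 0 < ∑ α ∈ s, (g α + ε) := by
      have hne : s.Nonempty := by
        rcases Finset.eq_empty_or_nonempty s with h | h
        · rw [h] at hs1; simp at hs1
        · exact h
      exact Finset.sum_pos (fun α _ => hgε α) hne
    have hlog : Real.log (∑ α ∈ s, (g α + ε)) ≤ Real.log (M + m * ε) :=
      Real.log_le_log hpos hb2
    rw [hl, hr] at hj2
    rw [Finset.sum_sub_distrib] at hj2
    have hfull1 : ∑ α ∈ s, lam α * Real.log (g α + ε) = ∑ α, lam α * Real.log (g α + ε) := by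
      rw [hsdef]
      exact Finset.sum_filter_of_ne fun α _ hne h0 => hne (by rw [h0, zero_mul])
    have hfull2 : ∑ α ∈ s, lam α * Real.log (lam α) = ∑ α, lam α * Real.log (lam α) := by
      rw [hsdef]
      exact Finset.sum_filter_of_ne fun α _ hne h0 => hne (by rw [h0, zero_mul])
    rw [hfull1, hfull2] at hj2
    rw [s2] at s1
    linarith
  -- take ε → 0⁺
  have hMpos : (0:ℝ) < M := lt_of_lt_of_le one_pos hM1
  have hfinal : ∑ i, μ i * Real.log (μ i) ≤ (∑ α, lam α * Real.log (lam α)) + Real.log M := by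
    have ht : Filter.Tendsto (fun ε : ℝ => (∑ α, lam α * Real.log (lam α)) + Real.log (M + m * ε))
        (nhdsWithin 0 (Set.Ioi 0)) (nhds ((∑ α, lam α * Real.log (lam α)) + Real.log M)) := by
      have h1 : Filter.Tendsto (fun ε : ℝ => M + (m:ℝ) * ε) (nhds 0) (nhds M) := by
        have hc : Continuous (fun ε : ℝ => M + (m:ℝ) * ε) :=
          continuous_const.add (continuous_const.mul continuous_id)
        simpa using hc.tendsto 0
      have h2 : Filter.Tendsto (fun ε : ℝ => Real.log (M + m * ε)) (nhds 0) (nhds (Real.log M)) :=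
        ((Real.continuousAt_log hMpos.ne').tendsto.comp h1)
      exact (tendsto_const_nhds.add h2).mono_left nhdsWithin_le_nhds
    refine ge_of_tendsto ht ?_
    filter_upwards [self_mem_nhdsWithin] with ε hε
    exact key ε hε
  linarith
end
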